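/- Let m>n. If φ∈N̂ₙ, then there are φ₁,…,φ_k∈N̂ₘ such that XP⁻⊢φ≡⋁_{1≤i≤k}φᵢ. If α∈P̂ₙ, then there are α₁,…,α_k∈P̂ₘ such that XP⁻⊢α≡⋃_{1≤i≤k}αᵢ. -/

import Mathlib

attribute [local instance] Classical.propDecidable

mutual
/-- Path expressions of `XPath↓⁻` (no inequality tests in the language). -/
inductive PathExpr (A : Type) : Type
  | eps : PathExpr A
  | down : PathExpr A
  | test : NodeExpr A → PathExpr A
  | comp : PathExpr A → PathExpr A → PathExpr A
  | union : PathExpr A → PathExpr A → PathExpr A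

/-- Node expressions of `XPath↓⁻` (no inequality tests in the language). -/
inductive NodeExpr (A : Type) : Type
  | lab : A → NodeExpr A
  | neg : NodeExpr A → NodeExpr A
  | conj : NodeExpr A → NodeExpr A → NodeExpr A
  | diam : PathExpr A → NodeExpr A
  | eqTest : PathExpr A → PathExpr A → NodeExpr A
end

namespace XPathMinus

variable {A : Type}

/-- Defined disjunction `φ ∨ ψ := ¬(¬φ ∧ ¬ψ)`. -/
def nOr (φ ψ : NodeExpr A) : NodeExpr A := .neg (.conj (.neg φ) (.neg ψ))

/-- `⊤ := ⟨ε⟩`. -/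
def topN : NodeExpr A := .diam .eps

/-- `⊥ := ¬⊤`. -/
def botN : NodeExpr A := .neg topN

/-- `⊥̄ := [¬⟨ε⟩]`. -/
def botP : PathExpr A := .test (.neg (.diam .eps))

def bigOr (l : List (NodeExpr A)) : NodeExpr A := l.foldr nOr botN

def bigUnion (l : List (PathExpr A)) : PathExpr A := l.foldr PathExpr.union botP

/-- A data tree: a tree (connected, acyclic, unique parents except the root)
whose nodes carry labels from `A`, together with a partition of the nodes
(presented as an equivalence relation `eqd`). -/
structure DataTree (A : Type) where
  X : Type
  child : X → X → Prop
  root : X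
  label : X → A
  eqd : X → X → Prop
  eqd_equiv : Equivalence eqd
  parent_unique : ∀ ⦃x y z : X⦄, child x z → child y z → x = y
  root_no_parent : ∀ x : X, ¬ child x root
  reach : ∀ x : X, Relation.ReflTransGen child root x
  acyclic : ∀ x : X, ¬ Relation.TransGen child x x

mutual
/-- Semantics of path expressions. -/
def psem (T : DataTree A) : PathExpr A → T.X → T.X → Prop
  | .eps, x, y => x = y
  | .down, x, y => T.child x y
  | .test φ, x, y => x = y ∧ nsem T φ x
  | .comp α β, x, z => ∃ y, psem T α x y ∧ psem T β y z
  | .union α β, x, y => psem T α x y ∨ psem T β x y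

/-- Semantics of node expressions. -/
def nsem (T : DataTree A) : NodeExpr A → T.X → Prop
  | .lab a, x => T.label x = a
  | .neg φ, x => ¬ nsem T φ x
  | .conj φ ψ, x => nsem T φ x ∧ nsem T ψ x
  | .diam α, x => ∃ y, psem T α x y
  | .eqTest α β, x => ∃ y z, psem T α x y ∧ psem T β x z ∧ T.eqd y z
end

/-- Semantic equivalence of node expressions: same denotation in every data tree. -/
def nodeValid (φ ψ : NodeExpr A) : Prop :=
  ∀ (T : DataTree A) (x : T.X), nsem T φ x ↔ nsem T ψ x

/-- Semantic equivalence of path expressions: same denotation in every data tree. -/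
def pathValid (α β : PathExpr A) : Prop :=
  ∀ (T : DataTree A) (x y : T.X), psem T α x y ↔ psem T β x y

mutual
/-- Derivability of node equivalences in the axiomatic system `XP⁻`. -/
inductive NDer {A : Type} [Fintype A] : NodeExpr A → NodeExpr A → Prop
  | refl (φ : NodeExpr A) : NDer φ φ
  | symm {φ ψ : NodeExpr A} : NDer φ ψ → NDer ψ φ
  | trans {φ ψ ρ : NodeExpr A} : NDer φ ψ → NDer ψ ρ → NDer φ ρ
  | congr_neg {φ ψ : NodeExpr A} : NDer φ ψ → NDer (.neg φ) (.neg ψ)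
  | congr_conj {φ φ' ψ ψ' : NodeExpr A} :
      NDer φ φ' → NDer ψ ψ' → NDer (.conj φ ψ) (.conj φ' ψ')
  | congr_diam {α β : PathExpr A} : PDer α β → NDer (.diam α) (.diam β)
  | congr_eqTest {α α' β β' : PathExpr A} :
      PDer α α' → PDer β β' → NDer (.eqTest α β) (.eqTest α' β')
  | lbAx1 : NDer topN (bigOr ((Finset.univ : Finset A).toList.map NodeExpr.lab))
  | lbAx2 {a b : A} : a ≠ b → NDer botN (.conj (.lab a) (.lab b))
  | ndAx1 (φ ψ : NodeExpr A) :
      NDer φ (nOr (.neg (nOr (.neg φ) ψ)) (.neg (nOr (.neg φ) (.neg ψ))))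
  | ndAx2 (φ : NodeExpr A) : NDer (.diam (.test φ)) φ
  | ndAx3 (α β : PathExpr A) : NDer (.diam (.union α β)) (nOr (.diam α) (.diam β))
  | ndAx4 (α β : PathExpr A) : NDer (.diam (.comp α β)) (.diam (.comp α (.test (.diam β))))
  | eqAx1 (α β : PathExpr A) : NDer (.eqTest α β) (.eqTest β α)
  | eqAx2 (α β γ : PathExpr A) :
      NDer (.eqTest (.union α β) γ) (nOr (.eqTest α γ) (.eqTest β γ))
  | eqAx3 (φ : NodeExpr A) (α β : PathExpr A) :
      NDer (.conj φ (.eqTest α β)) (.eqTest (.comp (.test φ) α) β)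
  | eqAx4 (α β : PathExpr A) : NDer (nOr (.eqTest α β) (.diam α)) (.diam α)
  | eqAx5 (γ α β : PathExpr A) :
      NDer (nOr (.diam (.comp γ (.test (.eqTest α β)))) (.eqTest (.comp γ α) (.comp γ β)))
        (.eqTest (.comp γ α) (.comp γ β))
  | eqAx6 (α : PathExpr A) : NDer (.eqTest α α) (.diam α)
  | eqAx7 (α β : PathExpr A) :
      NDer (nOr (.conj (.eqTest α .eps) (.eqTest β .eps)) (.eqTest α β)) (.eqTest α β)
  | eqAx8 (α β γ : PathExpr A) :
      NDer (nOr (.eqTest α (.comp β (.test (.eqTest .eps γ)))) (.eqTest α (.comp β γ)))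
        (.eqTest α (.comp β γ))

/-- Derivability of path equivalences in the axiomatic system `XP⁻`. -/
inductive PDer {A : Type} [Fintype A] : PathExpr A → PathExpr A → Prop
  | refl (α : PathExpr A) : PDer α α
  | symm {α β : PathExpr A} : PDer α β → PDer β α
  | trans {α β γ : PathExpr A} : PDer α β → PDer β γ → PDer α γ
  | congr_test {φ ψ : NodeExpr A} : NDer φ ψ → PDer (.test φ) (.test ψ)
  | congr_comp {α α' β β' : PathExpr A} :
      PDer α α' → PDer β β' → PDer (.comp α β) (.comp α' β')
  | congr_union {α α' β β' : PathExpr A} :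
      PDer α α' → PDer β β' → PDer (.union α β) (.union α' β')
  | prAx1 (α β : PathExpr A) : PDer (.comp (.comp α (.test (.neg (.diam β)))) β) botP
  | prAx2 : PDer (.test topN) (.eps : PathExpr A)
  | prAx3 (φ ψ : NodeExpr A) : PDer (.test (nOr φ ψ)) (.union (.test φ) (.test ψ))
  | isAx1 (α β γ : PathExpr A) : PDer (.union (.union α β) γ) (.union α (.union β γ))
  | isAx2 (α β : PathExpr A) : PDer (.union α β) (.union β α)
  | isAx3 (α : PathExpr A) : PDer (.union α α) α
  | isAx4 (α β γ : PathExpr A) : PDer (.comp α (.comp β γ)) (.comp (.comp α β) γ)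
  | isAx5l (α : PathExpr A) : PDer (.comp .eps α) α
  | isAx5r (α : PathExpr A) : PDer (.comp α .eps) α
  | isAx6l (α β γ : PathExpr A) :
      PDer (.comp α (.union β γ)) (.union (.comp α β) (.comp α γ))
  | isAx6r (α β γ : PathExpr A) :
      PDer (.comp (.union α β) γ) (.union (.comp α γ) (.comp β γ))
  | isAx7 (α : PathExpr A) : PDer (.union botP α) α
end

/-- A node expression is `XP⁻`-consistent if it is not provably equivalent to `⊥`. -/
def NConsistent [Fintype A] (φ : NodeExpr A) : Prop := ¬ NDer φ botN

/-- A path expression is `XP⁻`-consistent if it is not provably equivalent to `⊥̄`. -/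
def PConsistent [Fintype A] (α : PathExpr A) : Prop := ¬ PDer α botP

/-- The normal form `a ∧ ⋀_{d ∈ C} d ∧ ⋀_{d ∈ D∖C} ¬d`, built along the canonical listing `D`. -/
noncomputable def mkNF (a : A) (C D : List (NodeExpr A)) : NodeExpr A :=
  D.foldl (fun acc d => .conj acc (if d ∈ C then d else .neg d)) (.lab a)

/-- The canonical lists of normal-form path expressions (first component)
and normal-form node expressions (second component) at each level. -/
noncomputable def NF (A : Type) [Fintype A] : ℕ → List (PathExpr A) × List (NodeExpr A)
  | 0 =>
    ([.eps],
      (Finset.univ : Finset A).toList.map fun a =>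
        NodeExpr.conj (.lab a) (.eqTest .eps .eps))
  | n+1 =>
    let P := (NF A n).1
    let N := (NF A n).2
    let P' : List (PathExpr A) :=
      .eps :: N.flatMap fun ψ => P.map fun β => PathExpr.comp .down (.comp (.test ψ) β)
    let D : List (NodeExpr A) :=
      P'.flatMap fun α => P'.map fun β => NodeExpr.eqTest α β
    let cands : List (NodeExpr A) :=
      D.sublists.flatMap fun C => (Finset.univ : Finset A).toList.map fun a => mkNF a C D
    (P', cands.filter fun φ => decide (NConsistent φ))

/-- `P̂ₙ`: normal-form path expressions of level `n`. -/
noncomputable def Pnf (A : Type) [Fintype A] (n : ℕ) : Set (PathExpr A) :=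
  {α | α ∈ (NF A n).1}

/-- `N̂ₙ`: normal-form node expressions of level `n`. -/
noncomputable def Nnf (A : Type) [Fintype A] (n : ℕ) : Set (NodeExpr A) :=
  {φ | φ ∈ (NF A n).2}

/-- `D̂ₙ`: data-aware diamonds between normal-form paths of level `n`. -/
noncomputable def Dnf (A : Type) [Fintype A] (n : ℕ) : Set (NodeExpr A) :=
  {φ | ∃ α ∈ Pnf A n, ∃ β ∈ Pnf A n, φ = NodeExpr.eqTest α β}

/-- The conjuncts of a node expression (flattening `∧`). -/
def conjuncts : NodeExpr A → List (NodeExpr A)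
  | .conj φ ψ => conjuncts φ ++ conjuncts ψ
  | φ => [φ]

/-- `δ` is a conjunct of `ψ`. -/
def IsConjunct (δ ψ : NodeExpr A) : Prop := δ ∈ conjuncts ψ

/-- Length of a path expression. -/
def plen : PathExpr A → ℕ
  | .eps => 0
  | .down => 1
  | .test _ => 0
  | .comp α β => plen α + plen β
  | .union α β => max (plen α) (plen β)

mutual
/-- Downward depth of a node expression. -/
def ndd : NodeExpr A → ℕ
  | .lab _ => 0
  | .neg φ => ndd φ
  | .conj φ ψ => max (ndd φ) (ndd ψ)
  | .diam α => pdd α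
  | .eqTest α β => max (pdd α) (pdd β)

/-- Downward depth of a path expression. -/
def pdd : PathExpr A → ℕ
  | .eps => 0
  | .down => 1
  | .test φ => ndd φ
  | .comp α β => max (max (pdd α) (pdd β)) (plen α + pdd β)
  | .union α β => max (pdd α) (pdd β)
end

/-- The path `↓[ψ]α`. -/
def dPath (ψ : NodeExpr A) (α : PathExpr A) : PathExpr A :=
  .comp .down (.comp (.test ψ) α)

/-- A path expression whose leftmost symbol is `↓`. -/
def startsWithDown : PathExpr A → Prop
  | .down => True
  | .comp α _ => startsWithDown α
  | _ => False

end XPathMinus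
namespace XPathMinus
variable {A : Type}

/-! ### Semantic helper lemmas -/

theorem nsem_nOr (T : DataTree A) (φ ψ : NodeExpr A) (x : T.X) :
    nsem T (nOr φ ψ) x ↔ nsem T φ x ∨ nsem T ψ x := by
  simp [nOr, nsem]; tauto

theorem nsem_topN (T : DataTree A) (x : T.X) : nsem T topN x := ⟨x, rfl⟩

theorem nsem_botN (T : DataTree A) (x : T.X) : ¬ nsem T (botN : NodeExpr A) x := by
  simp [botN, topN, nsem, psem]

theorem nsem_bigOr (T : DataTree A) (l : List (NodeExpr A)) (x : T.X) :
    nsem T (bigOr l) x ↔ ∃ φ ∈ l, nsem T φ x := by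
  induction l with
  | nil => simpa [bigOr] using nsem_botN T x
  | cons a l ih =>
    simp only [bigOr, List.foldr] at ih ⊢
    rw [nsem_nOr]
    simp [ih]

theorem nsound [Fintype A] {φ ψ : NodeExpr A} (h : NDer φ ψ) : nodeValid φ ψ := by
  refine NDer.rec (motive_1 := fun φ ψ _ => nodeValid φ ψ)
    (motive_2 := fun α β _ => pathValid α β)
    ?_ ?_ ?_ ?_ ?_ ?_ ?_ ?_ ?_ ?_ ?_ ?_ ?_ ?_ ?_ ?_ ?_ ?_ ?_ ?_ ?_ ?_ ?_ ?_ ?_ ?_ ?_ ?_ ?_ ?_ ?_ ?_ ?_ ?_ ?_ ?_ ?_ ?_ ?_ h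
  · -- refl
    intro φ T x
    exact Iff.rfl
  · -- symm
    intro _ _ _ ih T x
    exact (ih T x).symm
  · -- trans
    intro _ _ _ _ _ ih1 ih2 T x
    exact (ih1 T x).trans (ih2 T x)
  · -- congr_neg
    intro _ _ _ ih T x
    simp [nsem, ih T x]
  · -- congr_conj
    intro _ _ _ _ _ _ ih1 ih2 T x
    simp [nsem, ih1 T x, ih2 T x]
  · -- congr_diam
    intro _ _ _ ih T x
    simp only [nsem]; exact exists_congr fun y => ih T x y
  · -- congr_eqTest
    intro _ _ _ _ _ _ ih1 ih2 T x
    simp only [nsem]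
    exact exists_congr fun y => exists_congr fun z => by
      rw [ih1 T x y, ih2 T x z]
  · -- lbAx1
    intro T x
    rw [nsem_bigOr]
    constructor
    · intro _; exact ⟨.lab (T.label x), List.mem_map.mpr ⟨T.label x, by simp, rfl⟩, rfl⟩
    · intro _; exact nsem_topN T x
  · -- lbAx2
    intro a b hab T x
    constructor
    · intro h; exact absurd h (nsem_botN T x)
    · rintro ⟨h1, h2⟩; simp only [nsem] at h1 h2; exact absurd (h1.symm.trans h2) hab
  · -- ndAx1
    intro φ ψ T x
    simp only [nsem_nOr, nsem]
    tauto
  · -- ndAx2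
    intro φ T x
    simp only [nsem, psem]
    constructor
    · rintro ⟨y, rfl, h⟩; exact h
    · intro h; exact ⟨x, rfl, h⟩
  · -- ndAx3
    intro α β T x
    rw [nsem_nOr]
    simp only [nsem, psem]
    constructor
    · rintro ⟨y, h | h⟩; exacts [Or.inl ⟨y, h⟩, Or.inr ⟨y, h⟩]
    · rintro (⟨y, h⟩ | ⟨y, h⟩); exacts [⟨y, Or.inl h⟩, ⟨y, Or.inr h⟩]
  · -- ndAx4
    intro α β T x
    simp only [nsem, psem]
    constructor
    · rintro ⟨z, y, h1, h2⟩; exact ⟨y, y, h1, rfl, z, h2⟩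
    · rintro ⟨y, y', h1, rfl, z, h2⟩; exact ⟨z, y', h1, h2⟩
  · -- eqAx1
    intro α β T x
    simp only [nsem]
    constructor
    · rintro ⟨y, z, h1, h2, h3⟩; exact ⟨z, y, h2, h1, T.eqd_equiv.symm h3⟩
    · rintro ⟨y, z, h1, h2, h3⟩; exact ⟨z, y, h2, h1, T.eqd_equiv.symm h3⟩
  · -- eqAx2
    intro α β γ T x
    rw [nsem_nOr]
    simp only [nsem, psem]
    constructor
    · rintro ⟨y, z, h1 | h1, h2, h3⟩
      exacts [Or.inl ⟨y, z, h1, h2, h3⟩, Or.inr ⟨y, z, h1, h2, h3⟩]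
    · rintro (⟨y, z, h1, h2, h3⟩ | ⟨y, z, h1, h2, h3⟩)
      exacts [⟨y, z, Or.inl h1, h2, h3⟩, ⟨y, z, Or.inr h1, h2, h3⟩]
  · -- eqAx3
    intro φ α β T x
    simp only [nsem, psem]
    constructor
    · rintro ⟨hφ, y, z, h1, h2, h3⟩; exact ⟨y, z, ⟨x, ⟨rfl, hφ⟩, h1⟩, h2, h3⟩
    · rintro ⟨y, z, ⟨x', ⟨rfl, hφ⟩, h1⟩, h2, h3⟩; exact ⟨hφ, y, z, h1, h2, h3⟩
  · -- eqAx4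
    intro α β T x
    rw [nsem_nOr]
    simp only [nsem]
    constructor
    · rintro (⟨y, z, h1, _, _⟩ | h); exacts [⟨y, h1⟩, h]
    · exact Or.inr
  · -- eqAx5
    intro γ α β T x
    rw [nsem_nOr]
    simp only [nsem, psem]
    constructor
    · rintro (⟨w, y, hγ, rfl, u, v, h1, h2, h3⟩ | h)
      · exact ⟨u, v, ⟨y, hγ, h1⟩, ⟨y, hγ, h2⟩, h3⟩
      · exact h
    · exact Or.inr
  · -- eqAx6
    intro α T x
    simp only [nsem]
    constructor
    · rintro ⟨y, z, h1, _, _⟩; exact ⟨y, h1⟩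
    · rintro ⟨y, h⟩; exact ⟨y, y, h, h, T.eqd_equiv.refl y⟩
  · -- eqAx7
    intro α β T x
    rw [nsem_nOr]
    simp only [nsem, psem]
    constructor
    · rintro (⟨⟨y, x1, h1, rfl, h3⟩, ⟨z, x2, h2, rfl, h4⟩⟩ | h)
      · exact ⟨y, z, h1, h2, T.eqd_equiv.trans h3 (T.eqd_equiv.symm h4)⟩
      · exact h
    · exact Or.inr
  · -- eqAx8
    intro α β γ T x
    rw [nsem_nOr]
    simp only [nsem, psem]
    constructor
    · rintro (⟨u, v, h1, ⟨v', hβ, rfl, y, w, hy, hγ, hvw⟩, huv⟩ | h)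
      · subst hy
        exact ⟨u, w, h1, ⟨v', hβ, hγ⟩, T.eqd_equiv.trans huv hvw⟩
      · exact h
    · exact Or.inr
  · -- refl
    intro α T x y
    exact Iff.rfl
  · -- symm
    intro _ _ _ ih T x y
    exact (ih T x y).symm
  · -- trans
    intro _ _ _ _ _ ih1 ih2 T x y
    exact (ih1 T x y).trans (ih2 T x y)
  · -- congr_test
    intro _ _ _ ih T x y
    simp [psem, ih T x]
  · -- congr_comp
    intro _ _ _ _ _ _ ih1 ih2 T x y
    simp only [psem]
    exact exists_congr fun z => by rw [ih1 T x z, ih2 T z y]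
  · -- congr_union
    intro _ _ _ _ _ _ ih1 ih2 T x y
    simp only [psem]; rw [ih1 T x y, ih2 T x y]
  · -- prAx1
    intro α β T x y
    simp only [psem, botP, nsem]
    constructor
    · rintro ⟨z, ⟨w, h1, rfl, hn⟩, h2⟩
      exact absurd ⟨y, h2⟩ hn
    · rintro ⟨rfl, hn⟩
      exact absurd ⟨x, rfl⟩ hn
  · -- prAx2
    intro T x y
    simp only [psem, topN, nsem]
    constructor
    · rintro ⟨rfl, _⟩; rfl
    · rintro rfl; exact ⟨rfl, x, rfl⟩
  · -- prAx3
    intro φ ψ T x y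
    simp only [psem]
    rw [show (nsem T (nOr φ ψ) x ↔ nsem T φ x ∨ nsem T ψ x) from nsem_nOr T φ ψ x]
    tauto
  · -- isAx1
    intro α β γ T x y
    simp only [psem]; tauto
  · -- isAx2
    intro α β T x y
    simp only [psem]; tauto
  · -- isAx3
    intro α T x y
    simp only [psem]; tauto
  · -- isAx4
    intro α β γ T x y
    simp only [psem]
    constructor
    · rintro ⟨z, h1, w, h2, h3⟩; exact ⟨w, ⟨z, h1, h2⟩, h3⟩
    · rintro ⟨w, ⟨z, h1, h2⟩, h3⟩; exact ⟨z, h1, w, h2, h3⟩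
  · -- isAx5l
    intro α T x y
    simp only [psem]
    constructor
    · rintro ⟨z, rfl, h⟩; exact h
    · intro h; exact ⟨x, rfl, h⟩
  · -- isAx5r
    intro α T x y
    simp only [psem]
    constructor
    · rintro ⟨z, h, rfl⟩; exact h
    · intro h; exact ⟨y, h, rfl⟩
  · -- isAx6l
    intro α β γ T x y
    simp only [psem]
    constructor
    · rintro ⟨z, h1, h2 | h2⟩; exacts [Or.inl ⟨z, h1, h2⟩, Or.inr ⟨z, h1, h2⟩]
    · rintro (⟨z, h1, h2⟩ | ⟨z, h1, h2⟩); exacts [⟨z, h1, Or.inl h2⟩, ⟨z, h1, Or.inr h2⟩]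
  · -- isAx6r
    intro α β γ T x y
    simp only [psem]
    constructor
    · rintro ⟨z, h1 | h1, h2⟩; exacts [Or.inl ⟨z, h1, h2⟩, Or.inr ⟨z, h1, h2⟩]
    · rintro (⟨z, h1, h2⟩ | ⟨z, h1, h2⟩); exacts [⟨z, Or.inl h1, h2⟩, ⟨z, Or.inr h1, h2⟩]
  · -- isAx7
    intro α T x y
    simp only [psem, botP, nsem]
    constructor
    · rintro (⟨rfl, hn⟩ | h)
      · exact absurd ⟨x, rfl⟩ hn
      · exact h
    · exact Or.inr

end XPathMinus
namespace XPathMinus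
variable {A : Type}

/-- A single-node data tree with label `a`. -/
def oneTree (a : A) : DataTree A where
  X := PUnit
  child _ _ := False
  root := PUnit.unit
  label _ := a
  eqd _ _ := True
  eqd_equiv := ⟨fun _ => trivial, fun _ => trivial, fun _ _ => trivial⟩
  parent_unique := by intros; rfl
  root_no_parent := fun _ h => h
  reach := fun x => by cases x; exact Relation.ReflTransGen.refl
  acyclic := fun x h => by
    induction h with
    | single h => exact h
    | tail _ h => exact h

theorem atom0_consistent [Fintype A] (a : A) :
    NConsistent (NodeExpr.conj (.lab a) (.eqTest .eps .eps)) := by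
  intro h
  have := (nsound h (oneTree a) PUnit.unit).mp
    ⟨rfl, PUnit.unit, PUnit.unit, rfl, rfl, trivial⟩
  exact nsem_botN (oneTree a) PUnit.unit this

end XPathMinus
namespace XPathMinus
variable {A : Type} [Fintype A]

open NodeExpr PathExpr

/-! ### Derived equational lemmas -/

theorem NDer.or_congr {φ φ' ψ ψ' : NodeExpr A} (h1 : NDer φ φ') (h2 : NDer ψ ψ') :
    NDer (nOr φ ψ) (nOr φ' ψ') :=
  .congr_neg (.congr_conj (.congr_neg h1) (.congr_neg h2))

/-- `φ ∨ ψ ≡ ⟨[φ] ∪ [ψ]⟩`. -/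
theorem NDer.or_diam (φ ψ : NodeExpr A) :
    NDer (nOr φ ψ) (.diam (.union (.test φ) (.test ψ))) :=
  .trans (.or_congr (.symm (.ndAx2 φ)) (.symm (.ndAx2 ψ))) (.symm (.ndAx3 _ _))

theorem NDer.or_comm (φ ψ : NodeExpr A) : NDer (nOr φ ψ) (nOr ψ φ) :=
  .trans (.or_diam φ ψ) (.trans (.congr_diam (.isAx2 _ _)) (.symm (.or_diam ψ φ)))

theorem NDer.or_assoc (φ ψ χ : NodeExpr A) :
    NDer (nOr (nOr φ ψ) χ) (nOr φ (nOr ψ χ)) := by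
  have h1 : NDer (nOr (nOr φ ψ) χ) (.diam (.union (.union (.test φ) (.test ψ)) (.test χ))) :=
    .trans (.or_diam _ _) (.congr_diam (.congr_union (.prAx3 φ ψ) (.refl _)))
  have h2 : NDer (nOr φ (nOr ψ χ)) (.diam (.union (.test φ) (.union (.test ψ) (.test χ)))) :=
    .trans (.or_diam _ _) (.congr_diam (.congr_union (.refl _) (.prAx3 ψ χ)))
  exact .trans h1 (.trans (.congr_diam (.isAx1 _ _ _)) (.symm h2))

theorem NDer.or_idem (φ : NodeExpr A) : NDer (nOr φ φ) φ :=
  .trans (.or_diam φ φ) (.trans (.congr_diam (.isAx3 _)) (.ndAx2 φ))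

theorem NDer.bot_or (φ : NodeExpr A) : NDer (nOr botN φ) φ :=
  .trans (.or_diam botN φ) (.trans (.congr_diam (.isAx7 _)) (.ndAx2 φ))

theorem NDer.or_bot (φ : NodeExpr A) : NDer (nOr φ botN) φ :=
  .trans (.or_comm _ _) (.bot_or φ)

theorem NDer.dn_bot : NDer (.neg (.neg (botN : NodeExpr A))) botN := by
  have h := NDer.ndAx1 (botN : NodeExpr A) botN
  have e1 : NDer (nOr (.neg (botN : NodeExpr A)) botN) (.neg botN) :=
    .trans (.or_comm _ _) (.bot_or _)
  have e2 : NDer (nOr (.neg (botN : NodeExpr A)) (.neg botN)) (.neg botN) := .or_idem _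
  have : NDer (botN : NodeExpr A)
      (nOr (.neg (.neg botN)) (.neg (.neg botN))) :=
    .trans h (.or_congr (.congr_neg e1) (.congr_neg e2))
  exact .symm (.trans this (.or_idem _))

theorem NDer.neg_inj {φ ψ : NodeExpr A} (h : NDer (.neg φ) (.neg ψ)) : NDer φ ψ := by
  have h1 := NDer.ndAx1 φ ψ
  have h2 := NDer.ndAx1 ψ ψ
  exact .trans h1 (.trans
    (.or_congr (.congr_neg (.or_congr h (.refl _))) (.congr_neg (.or_congr h (.refl _))))
    (.symm h2))

theorem NDer.dn_top : NDer (.neg (.neg (topN : NodeExpr A))) topN :=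
  NDer.neg_inj (NDer.dn_bot : NDer (.neg (.neg (.neg (topN : NodeExpr A)))) (.neg topN))

/-- `⊤ ≡ ¬φ ∨ ¬¬φ`. -/
theorem NDer.em_neg (φ : NodeExpr A) :
    NDer (topN : NodeExpr A) (nOr (.neg φ) (.neg (.neg φ))) := by
  have h := NDer.ndAx1 (topN : NodeExpr A) φ
  exact .trans h (.or_congr (.congr_neg (.bot_or φ)) (.congr_neg (.bot_or (.neg φ))))

theorem NDer.negtop_absorb (φ : NodeExpr A) :
    NDer (nOr (.neg φ) topN) topN := by
  refine .trans (.or_congr (.refl _) (.em_neg φ)) ?_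
  refine .trans (.symm (.or_assoc _ _ _)) ?_
  exact .trans (.or_congr (.or_idem _) (.refl _)) (.symm (.em_neg φ))

theorem NDer.dn (φ : NodeExpr A) : NDer (.neg (.neg φ)) φ := by
  have h := NDer.ndAx1 φ botN
  have e1 : NDer (.neg (nOr (.neg φ) botN)) (.neg (.neg φ)) := .congr_neg (.or_bot _)
  have e2 : NDer (.neg (nOr (.neg φ) (.neg botN))) botN := by
    have : NDer (nOr (.neg φ) (.neg (botN : NodeExpr A))) topN :=
      .trans (.or_congr (.refl _) NDer.dn_top) (.negtop_absorb φ)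
    exact .congr_neg this
  refine .symm (.trans h (.trans (.or_congr e1 e2) ?_))
  exact .or_bot _

theorem NDer.dm_and (φ ψ : NodeExpr A) :
    NDer (.neg (.conj φ ψ)) (nOr (.neg φ) (.neg ψ)) :=
  .symm (.congr_neg (.congr_conj (.dn φ) (.dn ψ)))

theorem NDer.dm_or (φ ψ : NodeExpr A) :
    NDer (.neg (nOr φ ψ)) (.conj (.neg φ) (.neg ψ)) :=
  .dn _

theorem NDer.and_comm (φ ψ : NodeExpr A) : NDer (.conj φ ψ) (.conj ψ φ) :=
  NDer.neg_inj (.trans (.dm_and φ ψ) (.trans (.or_comm _ _) (.symm (.dm_and ψ φ))))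

theorem NDer.and_assoc (φ ψ χ : NodeExpr A) :
    NDer (.conj (.conj φ ψ) χ) (.conj φ (.conj ψ χ)) := by
  refine NDer.neg_inj ?_
  refine .trans (.dm_and _ _) (.trans (.or_congr (.dm_and φ ψ) (.refl _)) ?_)
  refine .trans (.or_assoc _ _ _) ?_
  refine .trans (.or_congr (.refl _) (.symm (.dm_and ψ χ))) ?_
  exact .symm (.dm_and _ _)

theorem NDer.and_idem (φ : NodeExpr A) : NDer (.conj φ φ) φ :=
  NDer.neg_inj (.trans (.dm_and φ φ) (.or_idem _))

theorem NDer.em (φ : NodeExpr A) : NDer (nOr φ (.neg φ)) topN :=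
  .trans (.or_congr (.symm (.dn φ)) (.refl _))
    (.trans (.or_comm _ _) (.symm (.em_neg φ)))

theorem NDer.compl (φ : NodeExpr A) : NDer (.conj φ (.neg φ)) botN := by
  refine NDer.neg_inj (.trans (.dm_and _ _) ?_)
  refine .trans (.or_congr (.refl _) (.refl _)) ?_
  have h1 : NDer (nOr (.neg φ) (.neg (.neg φ))) (topN : NodeExpr A) := .symm (.em_neg φ)
  exact .trans h1 (.symm NDer.dn_top)

/-- `⟨[φ]α⟩ ≡ φ ∧ ⟨α⟩`. -/
theorem NDer.and_test (φ : NodeExpr A) (α : PathExpr A) :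
    NDer (.diam (.comp (.test φ) α)) (.conj φ (.diam α)) := by
  have h1 : NDer (.diam (.comp (.test φ) α))
      (.eqTest (.comp (.test φ) α) (.comp (.test φ) α)) := .symm (.eqAx6 _)
  have h2 : NDer (.eqTest (.comp (.test φ) α) (.comp (.test φ) α))
      (.conj φ (.eqTest α (.comp (.test φ) α))) := .symm (.eqAx3 _ _ _)
  have h3 : NDer (.eqTest α (.comp (.test φ) α)) (.conj φ (.eqTest α α)) :=
    .trans (.eqAx1 _ _) (.symm (.eqAx3 _ _ _))
  have h4 : NDer (.diam (.comp (.test φ) α)) (.conj φ (.conj φ (.diam α))) :=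
    .trans h1 (.trans h2 (.congr_conj (.refl _)
      (.trans h3 (.congr_conj (.refl _) (.eqAx6 _)))))
  refine .trans h4 ?_
  exact .trans (.symm (.and_assoc _ _ _)) (.congr_conj (.and_idem φ) (.refl _))

theorem NDer.and_top (φ : NodeExpr A) : NDer (.conj φ topN) φ := by
  have : NDer (.conj φ topN) (.diam (.comp (.test φ) .eps)) := .symm (.and_test φ .eps)
  exact .trans this (.trans (.congr_diam (.isAx5r _)) (.ndAx2 φ))

theorem NDer.top_and (φ : NodeExpr A) : NDer (.conj topN φ) φ :=
  .trans (.and_comm _ _) (.and_top φ)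

theorem NDer.distrib (φ ψ χ : NodeExpr A) :
    NDer (.conj φ (nOr ψ χ)) (nOr (.conj φ ψ) (.conj φ χ)) := by
  have h1 : NDer (.conj φ (nOr ψ χ)) (.diam (.comp (.test φ) (.union (.test ψ) (.test χ)))) :=
    .trans (.congr_conj (.refl _) (.or_diam ψ χ)) (.symm (.and_test _ _))
  refine .trans h1 ?_
  refine .trans (.congr_diam (.isAx6l _ _ _)) ?_
  refine .trans (.ndAx3 _ _) ?_
  refine .or_congr (.trans (.and_test _ _) (.congr_conj (.refl _) (.ndAx2 ψ)))
    (.trans (.and_test _ _) (.congr_conj (.refl _) (.ndAx2 χ)))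

theorem NDer.and_bot (φ : NodeExpr A) : NDer (.conj φ botN) botN := by
  refine .trans (.congr_conj (.refl _) (.symm (.compl φ))) ?_
  refine .trans (.symm (.and_assoc _ _ _)) ?_
  exact .trans (.congr_conj (.and_idem φ) (.refl _)) (.compl φ)

theorem NDer.bot_and (φ : NodeExpr A) : NDer (.conj botN φ) botN :=
  .trans (.and_comm _ _) (.and_bot φ)

/-- Case split: `φ ≡ (φ∧ψ) ∨ (φ∧¬ψ)`. -/
theorem NDer.split (φ ψ : NodeExpr A) :
    NDer φ (nOr (.conj φ ψ) (.conj φ (.neg ψ))) := by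
  refine .trans (.symm (.and_top φ)) ?_
  exact .trans (.congr_conj (.refl _) (.symm (.em ψ))) (.distrib _ _ _)

theorem NDer.and_absorb_neg {θ ψ : NodeExpr A} (h : NDer (.conj θ ψ) θ) :
    NDer (.conj θ (.neg ψ)) botN := by
  refine .trans (.congr_conj (.symm h) (.refl _)) ?_
  exact .trans (.and_assoc _ _ _) (.trans (.congr_conj (.refl _) (.compl ψ)) (.and_bot θ))

theorem NDer.and_neg_of_bot {θ ψ : NodeExpr A} (h : NDer (.conj θ ψ) botN) :
    NDer (.conj θ (.neg ψ)) θ := by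
  refine .symm (.trans (.split θ ψ) ?_)
  exact .trans (.or_congr h (.refl _)) (.bot_or _)

theorem NDer.diam_botP : NDer (.diam (botP : PathExpr A)) botN := .ndAx2 botN

theorem NDer.eq_botP (γ : PathExpr A) : NDer (.eqTest botP γ) botN := by
  have h1 : NDer (.eqTest (botP : PathExpr A) γ)
      (nOr (.eqTest botP γ) (.diam botP)) :=
    .trans (.symm (.or_bot _)) (.or_congr (.refl _) (.symm NDer.diam_botP))
  exact .trans h1 (.trans (.eqAx4 _ _) NDer.diam_botP)

end XPathMinus
namespace XPathMinus
variable {A : Type} [Fintype A]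

open NodeExpr PathExpr

@[simp] theorem bigOr_nil : bigOr ([] : List (NodeExpr A)) = botN := rfl
@[simp] theorem bigOr_cons (x : NodeExpr A) (l : List (NodeExpr A)) :
    bigOr (x :: l) = nOr x (bigOr l) := rfl
@[simp] theorem bigUnion_nil : bigUnion ([] : List (PathExpr A)) = botP := rfl
@[simp] theorem bigUnion_cons (x : PathExpr A) (l : List (PathExpr A)) :
    bigUnion (x :: l) = PathExpr.union x (bigUnion l) := rfl

theorem NDer.bigOr_append (l₁ l₂ : List (NodeExpr A)) :
    NDer (bigOr (l₁ ++ l₂)) (nOr (bigOr l₁) (bigOr l₂)) := by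
  induction l₁ with
  | nil => exact .symm (.bot_or _)
  | cons x l ih =>
    simpa using .trans (.or_congr (.refl x) ih) (.symm (.or_assoc _ _ _))

theorem NDer.bigOr_map_congr {α : Type*} {L : List α} {f g : α → NodeExpr A}
    (h : ∀ x ∈ L, NDer (f x) (g x)) :
    NDer (bigOr (L.map f)) (bigOr (L.map g)) := by
  induction L with
  | nil => exact .refl _
  | cons x L ih =>
    simpa using .or_congr (h x (by simp)) (ih fun y hy => h y (by simp [hy]))

theorem NDer.and_bigOr (φ : NodeExpr A) (l : List (NodeExpr A)) :
    NDer (.conj φ (bigOr l)) (bigOr (l.map (.conj φ ·))) := by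
  induction l with
  | nil => simpa using .and_bot φ
  | cons x l ih =>
    simpa using .trans (.distrib _ _ _) (.or_congr (.refl _) ih)

theorem NDer.le_bigOr {x : NodeExpr A} {l : List (NodeExpr A)} (hx : x ∈ l) :
    NDer (nOr x (bigOr l)) (bigOr l) := by
  induction l with
  | nil => cases hx
  | cons y l ih =>
    rcases List.mem_cons.mp hx with rfl | hx
    · simpa using .trans (.symm (.or_assoc _ _ _)) (.or_congr (.or_idem x) (.refl _))
    · simp only [bigOr_cons]
      refine .trans (.symm (.or_assoc _ _ _)) ?_
      refine .trans (.or_congr (.or_comm _ _) (.refl _)) ?_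
      exact .trans (.or_assoc _ _ _) (.or_congr (.refl _) (ih hx))

theorem NDer.bigOr_dich {θ : NodeExpr A} {l : List (NodeExpr A)}
    (h : ∀ x ∈ l, NDer x θ ∨ NDer x botN) :
    NDer (bigOr l) θ ∨ NDer (bigOr l) botN := by
  induction l with
  | nil => exact Or.inr (.refl _)
  | cons x l ih =>
    have hx := h x (by simp)
    have hl := ih fun y hy => h y (by simp [hy])
    simp only [bigOr_cons]
    rcases hx with hx | hx <;> rcases hl with hl | hl
    · exact Or.inl (.trans (.or_congr hx hl) (.or_idem θ))
    · exact Or.inl (.trans (.or_congr hx hl) (.or_bot θ))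
    · exact Or.inl (.trans (.or_congr hx hl) (.bot_or θ))
    · exact Or.inr (.trans (.or_congr hx hl) (.bot_or botN))

theorem NDer.bigOr_flat {α : Type*} {l : List α} {f : α → NodeExpr A}
    {g : α → List (NodeExpr A)}
    (h : ∀ x ∈ l, NDer (f x) (bigOr (g x))) :
    NDer (bigOr (l.map f)) (bigOr (l.flatMap g)) := by
  induction l with
  | nil => exact .refl _
  | cons x l ih =>
    simp only [List.map_cons, List.flatMap_cons, bigOr_cons]
    refine .trans (.or_congr (h x (by simp)) (ih fun y hy => h y (by simp [hy]))) ?_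
    exact .symm (.bigOr_append _ _)

theorem NDer.and_neg_bigOr_all {θ : NodeExpr A} {l : List (NodeExpr A)}
    (h : ∀ y ∈ l, NDer (.conj θ y) botN) :
    NDer (.conj θ (.neg (bigOr l))) θ := by
  induction l with
  | nil =>
    simpa using .trans (.congr_conj (.refl θ) NDer.dn_top) (.and_top θ)
  | cons y l ih =>
    have h1 : NDer (.neg (bigOr (y :: l))) (.conj (.neg y) (.neg (bigOr l))) := by
      simpa using NDer.dm_or y (bigOr l)
    refine .trans (.congr_conj (.refl θ) h1) ?_
    refine .trans (.symm (.and_assoc _ _ _)) ?_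
    have h2 : NDer (.conj θ (.neg y)) θ := .and_neg_of_bot (h y (by simp))
    exact .trans (.congr_conj h2 (.refl _)) (ih fun z hz => h z (by simp [hz]))

theorem NDer.and_neg_bigOr_mem {θ y : NodeExpr A} {l : List (NodeExpr A)}
    (hy : y ∈ l) (h : NDer (.conj θ y) θ) :
    NDer (.conj θ (.neg (bigOr l))) botN := by
  have h1 : NDer (.neg (bigOr l)) (.conj (.neg y) (.neg (bigOr l))) :=
    .trans (.congr_neg (.symm (.le_bigOr hy))) (.dm_or _ _)
  refine .trans (.congr_conj (.refl θ) h1) ?_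
  refine .trans (.symm (.and_assoc _ _ _)) ?_
  refine .trans (.congr_conj (.and_absorb_neg h) (.refl _)) ?_
  exact .bot_and _

/-! ### Path list lemmas -/

theorem PDer.union_bot (α : PathExpr A) : PDer (.union α botP) α :=
  .trans (.isAx2 _ _) (.isAx7 _)

theorem PDer.bigUnion_append (l₁ l₂ : List (PathExpr A)) :
    PDer (bigUnion (l₁ ++ l₂)) (.union (bigUnion l₁) (bigUnion l₂)) := by
  induction l₁ with
  | nil => exact .symm (.isAx7 _)
  | cons x l ih =>
    simpa using .trans (.congr_union (.refl x) ih) (.symm (.isAx1 _ _ _))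

theorem PDer.bigUnion_map_congr {α : Type*} {L : List α} {f g : α → PathExpr A}
    (h : ∀ x ∈ L, PDer (f x) (g x)) :
    PDer (bigUnion (L.map f)) (bigUnion (L.map g)) := by
  induction L with
  | nil => exact .refl _
  | cons x L ih =>
    simpa using .congr_union (h x (by simp)) (ih fun y hy => h y (by simp [hy]))

theorem PDer.bigUnion_flat {α : Type*} {l : List α} {f : α → PathExpr A}
    {g : α → List (PathExpr A)}
    (h : ∀ x ∈ l, PDer (f x) (bigUnion (g x))) :
    PDer (bigUnion (l.map f)) (bigUnion (l.flatMap g)) := by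
  induction l with
  | nil => exact .refl _
  | cons x l ih =>
    simp only [List.map_cons, List.flatMap_cons, bigUnion_cons]
    refine .trans (.congr_union (h x (by simp)) (ih fun y hy => h y (by simp [hy]))) ?_
    exact .symm (.bigUnion_append _ _)

theorem PDer.test_bigOr (l : List (NodeExpr A)) :
    PDer (.test (bigOr l)) (bigUnion (l.map .test)) := by
  induction l with
  | nil => exact .refl _
  | cons x l ih =>
    simpa using .trans (.prAx3 x (bigOr l)) (.congr_union (.refl _) ih)

theorem PDer.comp_right_bigUnion (x : PathExpr A) (L : List (PathExpr A)) (γ : PathExpr A) :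
    PDer (.comp (bigUnion (x :: L)) γ) (bigUnion ((x :: L).map (.comp · γ))) := by
  induction L generalizing x with
  | nil =>
    simpa using .trans (.congr_comp (.union_bot x) (.refl γ)) (.symm (.union_bot _))
  | cons y L ih =>
    simp only [bigUnion_cons, List.map_cons] at ih ⊢
    refine .trans (.isAx6r _ _ _) ?_
    exact .congr_union (.refl _) (ih y)

theorem PDer.comp_left_bigUnion (γ : PathExpr A) (x : PathExpr A) (L : List (PathExpr A)) :
    PDer (.comp γ (bigUnion (x :: L))) (bigUnion ((x :: L).map (.comp γ ·))) := by
  induction L generalizing x with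
  | nil =>
    simpa using .trans (.congr_comp (.refl γ) (.union_bot x)) (.symm (.union_bot _))
  | cons y L ih =>
    simp only [bigUnion_cons, List.map_cons] at ih ⊢
    refine .trans (.isAx6l _ _ _) ?_
    exact .congr_union (.refl _) (ih y)

/-- Splitting an equality test over a union on the left. -/
theorem NDer.eq_bigUnion_left (L : List (PathExpr A)) (γ : PathExpr A) :
    NDer (.eqTest (bigUnion L) γ) (bigOr (L.map (.eqTest · γ))) := by
  induction L with
  | nil => simpa using NDer.eq_botP γ
  | cons x L ih =>
    simpa using .trans (.eqAx2 _ _ _) (.or_congr (.refl _) ih)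

/-- Splitting an equality test over unions on both sides. -/
theorem NDer.eq_bigUnion (Lα Lβ : List (PathExpr A)) :
    NDer (.eqTest (bigUnion Lα) (bigUnion Lβ))
      (bigOr (Lα.flatMap fun α' => Lβ.map fun β' => NodeExpr.eqTest α' β')) := by
  refine .trans (.eq_bigUnion_left Lα _) ?_
  refine NDer.bigOr_flat fun α' _ => ?_
  refine .trans (.eqAx1 _ _) ?_
  refine .trans (.eq_bigUnion_left Lβ α') ?_
  exact NDer.bigOr_map_congr fun β' _ => .eqAx1 _ _

end XPathMinus
namespace XPathMinus
set_option linter.unusedSectionVars false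
variable {A : Type} [Fintype A]

open NodeExpr PathExpr

/-- Generalized normal form with arbitrary base. -/
noncomputable def mkNFb (base : NodeExpr A) (C D : List (NodeExpr A)) : NodeExpr A :=
  D.foldl (fun acc d => .conj acc (if d ∈ C then d else .neg d)) base

theorem mkNF_eq_mkNFb (a : A) (C D : List (NodeExpr A)) :
    mkNF a C D = mkNFb (.lab a) C D := rfl

theorem mkNFb_nil (base : NodeExpr A) (C : List (NodeExpr A)) :
    mkNFb base C [] = base := rfl

theorem mkNFb_cons (base : NodeExpr A) (C : List (NodeExpr A)) (d : NodeExpr A)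
    (D : List (NodeExpr A)) :
    mkNFb base C (d :: D) = mkNFb (.conj base (if d ∈ C then d else .neg d)) C D := rfl

theorem mkNFb_append_singleton (base : NodeExpr A) (C D : List (NodeExpr A))
    (d : NodeExpr A) :
    mkNFb base C (D ++ [d]) = .conj (mkNFb base C D) (if d ∈ C then d else .neg d) := by
  simp [mkNFb, List.foldl_append]

theorem mkNFb_congr {C C' : List (NodeExpr A)} (D : List (NodeExpr A))
    (h : ∀ e ∈ D, (e ∈ C ↔ e ∈ C')) (base : NodeExpr A) :
    mkNFb base C D = mkNFb base C' D := by
  induction D generalizing base with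
  | nil => rfl
  | cons d D ih =>
    rw [mkNFb_cons, mkNFb_cons]
    rw [if_congr (h d (by simp)) rfl rfl]
    exact ih (fun e he => h e (by simp [he])) _

theorem neg_ne_self (d : NodeExpr A) : NodeExpr.neg d ≠ d := by
  intro h
  have := congrArg sizeOf h
  simp only [NodeExpr.neg.sizeOf_spec] at this
  omega

/-- Absorption: a normal form absorbs each of its conjuncts. -/
theorem NDer.mkNFb_absorb {C : List (NodeExpr A)} (D : List (NodeExpr A))
    (base x : NodeExpr A)
    (h : NDer (.conj base x) base ∨ ∃ d ∈ D, x = (if d ∈ C then d else .neg d)) :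
    NDer (.conj (mkNFb base C D) x) (mkNFb base C D) := by
  induction D generalizing base with
  | nil =>
    rcases h with h | ⟨d, hd, _⟩
    · exact h
    · cases hd
  | cons d D ih =>
    rw [mkNFb_cons]
    rcases h with h | ⟨e, he, hx⟩
    · refine ih _ (Or.inl ?_)
      set i := if d ∈ C then d else NodeExpr.neg d
      refine .trans (.and_assoc base i x) ?_
      refine .trans (.congr_conj (.refl _) (.and_comm i x)) ?_
      refine .trans (.symm (.and_assoc base x i)) ?_
      exact .congr_conj h (.refl _)
    · rcases List.mem_cons.mp he with rfl | he
      · refine ih _ (Or.inl ?_)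
        subst hx
        set i := if e ∈ C then e else NodeExpr.neg e
        refine .trans (.and_assoc base i i) ?_
        exact .congr_conj (.refl _) (.and_idem i)
      · exact ih _ (Or.inr ⟨e, he, hx⟩)

theorem NDer.and_absorb_neg' {θ ψ : NodeExpr A} (h : NDer (.conj θ (.neg ψ)) θ) :
    NDer (.conj θ ψ) botN := by
  refine .trans (.congr_conj (.symm h) (.refl _)) ?_
  refine .trans (.and_assoc _ _ _) ?_
  refine .trans (.congr_conj (.refl _) (.trans (.and_comm _ _) (.compl ψ))) ?_
  exact .and_bot θ

/-- A normal form decides every element of its conjunct list. -/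
theorem NDer.mkNFb_decide_pos {C D : List (NodeExpr A)} {e : NodeExpr A}
    (heD : e ∈ D) (heC : e ∈ C) (base : NodeExpr A) :
    NDer (.conj (mkNFb base C D) e) (mkNFb base C D) :=
  NDer.mkNFb_absorb D base e (Or.inr ⟨e, heD, by rw [if_pos heC]⟩)

theorem NDer.mkNFb_decide_neg {C D : List (NodeExpr A)} {e : NodeExpr A}
    (heD : e ∈ D) (heC : e ∉ C) (base : NodeExpr A) :
    NDer (.conj (mkNFb base C D) e) botN :=
  NDer.and_absorb_neg'
    (NDer.mkNFb_absorb D base (.neg e) (Or.inr ⟨e, heD, by rw [if_neg heC]⟩))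

/-- Dichotomy propagation through a fold of conjunctions. -/
theorem NDer.fold_dich {θ : NodeExpr A} (it : NodeExpr A → NodeExpr A)
    (D : List (NodeExpr A)) (base : NodeExpr A)
    (hb : NDer (.conj θ base) θ ∨ NDer (.conj θ base) botN)
    (hD : ∀ d ∈ D, NDer (.conj θ (it d)) θ ∨ NDer (.conj θ (it d)) botN) :
    NDer (.conj θ (D.foldl (fun acc d => .conj acc (it d)) base)) θ ∨
      NDer (.conj θ (D.foldl (fun acc d => .conj acc (it d)) base)) botN := by
  induction D generalizing base with
  | nil => exact hb
  | cons d D ih =>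
    simp only [List.foldl_cons]
    refine ih (.conj base (it d)) ?_ (fun e he => hD e (by simp [he]))
    have hsplit : NDer (.conj θ (.conj base (it d))) (.conj (.conj θ base) (it d)) :=
      .symm (.and_assoc _ _ _)
    rcases hb with hb | hb
    · rcases hD d (by simp) with h | h
      · exact Or.inl (.trans hsplit (.trans (.congr_conj hb (.refl _)) h))
      · exact Or.inr (.trans hsplit (.trans (.congr_conj hb (.refl _)) h))
    · refine Or.inr (.trans hsplit ?_)
      exact .trans (.congr_conj hb (.refl _)) (.bot_and _)

theorem NDer.bigOr_flat' {l : List (NodeExpr A)} {g : NodeExpr A → List (NodeExpr A)}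
    (h : ∀ x ∈ l, NDer x (bigOr (g x))) :
    NDer (bigOr l) (bigOr (l.flatMap g)) := by
  have := NDer.bigOr_flat (l := l) (f := id) (g := g) (fun x hx => h x hx)
  simpa using this

/-- Expansion of any node expression over a duplicate-free list `D`. -/
theorem NDer.expand {D : List (NodeExpr A)} (hD : D.Nodup) (base : NodeExpr A) :
    ∃ l : List (NodeExpr A),
      (∀ θ ∈ l, ∃ C, C ∈ D.sublists ∧ θ = mkNFb base C D) ∧ NDer base (bigOr l) := by
  induction D using List.reverseRecOn with
  | nil =>
    exact ⟨[base], fun θ hθ => by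
      simp at hθ; subst hθ; exact ⟨[], by simp, rfl⟩, .symm (.or_bot base)⟩
  | append_singleton D₀ d ih =>
    have hD₀ : D₀.Nodup := hD.sublist (List.sublist_append_left D₀ [d])
    have hdD₀ : d ∉ D₀ := by
      intro hd
      have := List.disjoint_of_nodup_append hD
      exact this hd (by simp)
    obtain ⟨l, hmem, hder⟩ := ih hD₀
    refine ⟨l.flatMap fun θ => [.conj θ d, .conj θ (.neg d)], ?_, ?_⟩
    · intro x hx
      rw [List.mem_flatMap] at hx
      obtain ⟨θ, hθ, hxθ⟩ := hx
      obtain ⟨C, hC, rfl⟩ := hmem θ hθ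
      have hCsub : C.Sublist D₀ := List.mem_sublists.mp hC
      have hdC : d ∉ C := fun h => hdD₀ (hCsub.subset h)
      simp only [List.mem_cons, List.not_mem_nil, or_false] at hxθ
      rcases hxθ with rfl | rfl
      · refine ⟨C ++ [d], ?_, ?_⟩
        · exact List.mem_sublists.mpr (hCsub.append (List.Sublist.refl [d]))
        · rw [mkNFb_append_singleton, if_pos (by simp)]
          congr 1
          refine mkNFb_congr D₀ (fun e he => ?_) base
          have hed : e ≠ d := fun h => hdD₀ (h ▸ he)
          simp [hed]
      · refine ⟨C, ?_, ?_⟩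
        · exact List.mem_sublists.mpr (hCsub.trans (List.sublist_append_left D₀ [d]))
        · rw [mkNFb_append_singleton, if_neg hdC]
    · refine .trans hder (NDer.bigOr_flat' fun θ _ => ?_)
      exact .trans (.split θ d) (.or_congr (.refl _) (.symm (.or_bot _)))

/-! ### Injectivity and nodup facts -/

theorem foldl_conj_inj (it it' : NodeExpr A → NodeExpr A) :
    ∀ (D : List (NodeExpr A)) (base base' : NodeExpr A),
      D.foldl (fun acc d => .conj acc (it d)) base =
        D.foldl (fun acc d => .conj acc (it' d)) base' →
      base = base' ∧ ∀ d ∈ D, it d = it' d := by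
  intro D
  induction D with
  | nil => exact fun base base' h => ⟨h, by simp⟩
  | cons d D ih =>
    intro base base' h
    simp only [List.foldl_cons] at h
    obtain ⟨h1, h2⟩ := ih _ _ h
    injection h1 with hb hi
    refine ⟨hb, ?_⟩
    intro e he
    rcases List.mem_cons.mp he with rfl | he
    · exact hi
    · exact h2 e he

theorem sublist_filter_mem {C D : List (NodeExpr A)} (h : C.Sublist D) (hD : D.Nodup) :
    D.filter (fun x => decide (x ∈ C)) = C := by
  induction h with
  | slnil => rfl
  | @cons l₁ l₂ a h ih =>
    have ha : a ∉ l₁ := fun hm => (List.nodup_cons.mp hD).1 (h.subset hm)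
    rw [List.filter_cons, if_neg (by simpa using ha)]
    exact ih (List.nodup_cons.mp hD).2
  | @cons_cons l₁ l₂ a h ih =>
    have hD2 := List.nodup_cons.mp hD
    rw [List.filter_cons, if_pos (by simp)]
    congr 1
    rw [List.filter_congr (fun x hx => ?_), ih hD2.2]
    have hxa : x ≠ a := fun he => hD2.1 (he ▸ hx)
    simp [hxa]

theorem sublist_ext {C C' D : List (NodeExpr A)} (h : C.Sublist D) (h' : C'.Sublist D)
    (hD : D.Nodup) (hiff : ∀ x, x ∈ C ↔ x ∈ C') : C = C' := by
  rw [← sublist_filter_mem h hD, ← sublist_filter_mem h' hD]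
  exact List.filter_congr fun x _ => by simp [hiff x]

theorem nodup_flatMap_of {α β : Type*} {l : List α} {f : α → List β} (hl : l.Nodup)
    (hf : ∀ a ∈ l, (f a).Nodup)
    (disj : ∀ a ∈ l, ∀ b ∈ l, a ≠ b → ∀ x, x ∈ f a → x ∈ f b → False) :
    (l.flatMap f).Nodup := by
  induction l with
  | nil => simp
  | cons a l ih =>
    simp only [List.flatMap_cons]
    have hnd := List.nodup_cons.mp hl
    refine List.Nodup.append (hf a (by simp)) ?_ ?_
    · exact ih hnd.2 (fun b hb => hf b (by simp [hb]))
        (fun b hb c hc hbc => disj b (by simp [hb]) c (by simp [hc]) hbc)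
    · intro x hx hx'
      rw [List.mem_flatMap] at hx'
      obtain ⟨b, hb, hxb⟩ := hx'
      exact disj a (by simp) b (by simp [hb]) (fun h => hnd.1 (h ▸ hb)) x hx hxb

end XPathMinus
namespace XPathMinus
set_option linter.unusedSectionVars false
variable {A : Type} [Fintype A]

open NodeExpr PathExpr

/-- The canonical list of level-`n` data tests. -/
noncomputable def Dlist (A : Type) [Fintype A] (n : ℕ) : List (NodeExpr A) :=
  (NF A n).1.flatMap fun α => (NF A n).1.map fun β => NodeExpr.eqTest α β

theorem NF_zero_1 : (NF A 0).1 = [PathExpr.eps] := rfl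

theorem NF_zero_2 : (NF A 0).2 =
    (Finset.univ : Finset A).toList.map
      (fun a => NodeExpr.conj (.lab a) (.eqTest .eps .eps)) := rfl

theorem NF_succ_1 (n : ℕ) : (NF A (n+1)).1 =
    .eps :: (NF A n).2.flatMap fun ψ =>
      (NF A n).1.map fun β => PathExpr.comp .down (.comp (.test ψ) β) := rfl

theorem NF_succ_2 (n : ℕ) : (NF A (n+1)).2 =
    ((Dlist A (n+1)).sublists.flatMap fun C =>
      (Finset.univ : Finset A).toList.map fun a => mkNF a C (Dlist A (n+1))).filter
      (fun φ => decide (NConsistent φ)) := rfl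

theorem NF_nodup (n : ℕ) : (NF A n).1.Nodup ∧ (NF A n).2.Nodup := by
  induction n with
  | zero =>
    constructor
    · simp [NF_zero_1]
    · rw [NF_zero_2]
      refine (Finset.univ.nodup_toList).map ?_
      intro a b h
      injection h with h1 _
      injection h1
  | succ n ih =>
    obtain ⟨hP, hN⟩ := ih
    have hP' : (NF A (n+1)).1.Nodup := by
      rw [NF_succ_1]
      refine List.Nodup.cons ?_ ?_
      · intro h
        rw [List.mem_flatMap] at h
        obtain ⟨ψ, _, h⟩ := h
        rw [List.mem_map] at h
        obtain ⟨β, _, h⟩ := h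
        cases h
      · refine nodup_flatMap_of hN ?_ ?_
        · intro ψ _
          refine hP.map ?_
          intro b b' h
          injection h with _ h
          injection h
        · intro ψ _ ψ' _ hne x hx hx'
          rw [List.mem_map] at hx hx'
          obtain ⟨β, _, rfl⟩ := hx
          obtain ⟨β', _, h⟩ := hx'
          injection h with _ h
          injection h with h _
          injection h with h
          exact hne h.symm
    have hD' : (Dlist A (n+1)).Nodup := by
      unfold Dlist
      refine nodup_flatMap_of hP' ?_ ?_
      · intro α _
        refine hP'.map ?_
        intro b b' h
        injection h
      · intro α _ α' _ hne x hx hx'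
        rw [List.mem_map] at hx hx'
        obtain ⟨β, _, rfl⟩ := hx
        obtain ⟨β', _, h⟩ := hx'
        injection h with h _
        exact hne h.symm
    refine ⟨hP', ?_⟩
    rw [NF_succ_2]
    refine List.Nodup.filter _ ?_
    refine nodup_flatMap_of (List.nodup_sublists.mpr hD') ?_ ?_
    · intro C _
      refine (Finset.univ.nodup_toList).map ?_
      intro a b h
      unfold mkNF at h
      have := (foldl_conj_inj _ _ _ _ _ h).1
      injection this
    · intro C hC C' hC' hne x hx hx'
      rw [List.mem_map] at hx hx'
      obtain ⟨a, _, rfl⟩ := hx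
      obtain ⟨b, _, h⟩ := hx'
      unfold mkNF at h
      have hit := (foldl_conj_inj _ _ _ _ _ h.symm).2
      have hCs := List.mem_sublists.mp hC
      have hCs' := List.mem_sublists.mp hC'
      refine hne (sublist_ext hCs hCs' hD' ?_)
      intro e
      constructor
      · intro heC
        have heD : e ∈ Dlist A (n+1) := hCs.subset heC
        have := hit e heD
        rw [if_pos heC] at this
        by_contra heC'
        rw [if_neg heC'] at this
        exact neg_ne_self e this.symm
      · intro heC'
        have heD : e ∈ Dlist A (n+1) := hCs'.subset heC'
        have := hit e heD
        rw [if_pos heC'] at this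
        by_contra heC
        rw [if_neg heC] at this
        exact neg_ne_self e this

theorem mem_N_succ_elim {n : ℕ} {φ : NodeExpr A} (h : φ ∈ (NF A (n+1)).2) :
    NConsistent φ ∧ ∃ a C, C ∈ (Dlist A (n+1)).sublists ∧ φ = mkNF a C (Dlist A (n+1)) := by
  rw [NF_succ_2] at h
  rw [List.mem_filter] at h
  obtain ⟨hmem, hcons⟩ := h
  refine ⟨of_decide_eq_true hcons, ?_⟩
  rw [List.mem_flatMap] at hmem
  obtain ⟨C, hC, hmem⟩ := hmem
  rw [List.mem_map] at hmem
  obtain ⟨a, _, rfl⟩ := hmem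
  exact ⟨a, C, hC, rfl⟩

theorem mem_N_succ_intro {n : ℕ} {a : A} {C : List (NodeExpr A)}
    (hC : C ∈ (Dlist A (n+1)).sublists) (hcons : NConsistent (mkNF a C (Dlist A (n+1)))) :
    mkNF a C (Dlist A (n+1)) ∈ (NF A (n+1)).2 := by
  rw [NF_succ_2, List.mem_filter]
  refine ⟨?_, decide_eq_true hcons⟩
  rw [List.mem_flatMap]
  exact ⟨C, hC, List.mem_map.mpr ⟨a, by simp, rfl⟩⟩

theorem mem_Dlist_elim {n : ℕ} {d : NodeExpr A} (h : d ∈ Dlist A n) :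
    ∃ α ∈ (NF A n).1, ∃ β ∈ (NF A n).1, d = NodeExpr.eqTest α β := by
  unfold Dlist at h
  rw [List.mem_flatMap] at h
  obtain ⟨α, hα, h⟩ := h
  rw [List.mem_map] at h
  obtain ⟨β, hβ, rfl⟩ := h
  exact ⟨α, hα, β, hβ, rfl⟩

theorem mem_Dlist_intro {n : ℕ} {α β : PathExpr A}
    (hα : α ∈ (NF A n).1) (hβ : β ∈ (NF A n).1) :
    NodeExpr.eqTest α β ∈ Dlist A n := by
  unfold Dlist
  rw [List.mem_flatMap]
  exact ⟨α, hα, List.mem_map.mpr ⟨β, hβ, rfl⟩⟩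

end XPathMinus
namespace XPathMinus
set_option linter.unusedSectionVars false
variable {A : Type} [Fintype A]

open NodeExpr PathExpr

theorem Dlist_nodup (n : ℕ) : (Dlist A n).Nodup := by
  have hP := (NF_nodup (A := A) n).1
  unfold Dlist
  refine nodup_flatMap_of hP ?_ ?_
  · intro α _
    refine hP.map ?_
    intro b b' h
    injection h
  · intro α _ α' _ hne x hx hx'
    rw [List.mem_map] at hx hx'
    obtain ⟨β, _, rfl⟩ := hx
    obtain ⟨β', _, h⟩ := hx'
    injection h with h _
    exact hne h.symm

theorem NDer.bigOr_lift₀ {P : NodeExpr A → Prop} :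
    ∀ {l : List (NodeExpr A)},
      (∀ x ∈ l, ∃ lx, (∀ θ ∈ lx, P θ) ∧ NDer x (bigOr lx)) →
      ∃ L, (∀ θ ∈ L, P θ) ∧ NDer (bigOr l) (bigOr L) := by
  intro l
  induction l with
  | nil => exact fun _ => ⟨[], by simp, .refl _⟩
  | cons x l ih =>
    intro h
    obtain ⟨lx, hlx, hx⟩ := h x (by simp)
    obtain ⟨L, hL, hl⟩ := ih fun y hy => h y (by simp [hy])
    refine ⟨lx ++ L, ?_, ?_⟩
    · intro θ hθ
      rcases List.mem_append.mp hθ with h' | h'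
      exacts [hlx θ h', hL θ h']
    · simpa using .trans (.or_congr hx hl) (.symm (.bigOr_append lx L))

theorem NDer.bigOr_lift_ne {P : NodeExpr A → Prop} :
    ∀ {l : List (NodeExpr A)},
      (∀ x ∈ l, ∃ lx, lx ≠ [] ∧ (∀ θ ∈ lx, P θ) ∧ NDer x (bigOr lx)) →
      ∃ L, (l ≠ [] → L ≠ []) ∧ (∀ θ ∈ L, P θ) ∧ NDer (bigOr l) (bigOr L) := by
  intro l
  induction l with
  | nil => exact fun _ => ⟨[], by simp, by simp, .refl _⟩
  | cons x l ih =>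
    intro h
    obtain ⟨lx, hne, hlx, hx⟩ := h x (by simp)
    obtain ⟨L, _, hL, hl⟩ := ih fun y hy => h y (by simp [hy])
    refine ⟨lx ++ L, fun _ => by simp [hne], ?_, ?_⟩
    · intro θ hθ
      rcases List.mem_append.mp hθ with h' | h'
      exacts [hlx θ h', hL θ h']
    · simpa using .trans (.or_congr hx hl) (.symm (.bigOr_append lx L))

theorem PDer.bigUnion_lift_ne {P : PathExpr A → Prop} :
    ∀ {l : List (PathExpr A)},
      (∀ x ∈ l, ∃ lx, lx ≠ [] ∧ (∀ θ ∈ lx, P θ) ∧ PDer x (bigUnion lx)) →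
      ∃ L, (l ≠ [] → L ≠ []) ∧ (∀ θ ∈ L, P θ) ∧ PDer (bigUnion l) (bigUnion L) := by
  intro l
  induction l with
  | nil => exact fun _ => ⟨[], by simp, by simp, .refl _⟩
  | cons x l ih =>
    intro h
    obtain ⟨lx, hne, hlx, hx⟩ := h x (by simp)
    obtain ⟨L, _, hL, hl⟩ := ih fun y hy => h y (by simp [hy])
    refine ⟨lx ++ L, fun _ => by simp [hne], ?_, ?_⟩
    · intro θ hθ
      rcases List.mem_append.mp hθ with h' | h'
      exacts [hlx θ h', hL θ h']
    · simpa using .trans (.congr_union hx hl) (.symm (.bigUnion_append lx L))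

theorem NDer.label_dich (a b : A) (C D : List (NodeExpr A)) :
    NDer (.conj (mkNFb (.lab a) C D) (.lab b)) (mkNFb (.lab a) C D) ∨
      NDer (.conj (mkNFb (.lab a) C D) (.lab b)) botN := by
  have habs : NDer (.conj (mkNFb (.lab a) C D) (.lab a)) (mkNFb (.lab a) C D) :=
    NDer.mkNFb_absorb D (.lab a) (.lab a) (Or.inl (.and_idem _))
  by_cases hab : a = b
  · subst hab; exact Or.inl habs
  · refine Or.inr ?_
    refine .trans (.congr_conj (.symm habs) (.refl _)) ?_
    refine .trans (.and_assoc _ _ _) ?_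
    refine .trans (.congr_conj (.refl _) (.symm (.lbAx2 hab))) ?_
    exact .and_bot _

/-- Statement of the one-step path lift at level `n`. -/
def PathLift (n : ℕ) : Prop :=
  ∀ α ∈ (NF A n).1, ∃ l : List (PathExpr A), l ≠ [] ∧
    (∀ β ∈ l, β ∈ (NF A (n+1)).1) ∧ PDer α (bigUnion l)

/-- Statement of the one-step node lift at level `n`. -/
def NodeLift (n : ℕ) : Prop :=
  ∀ φ ∈ (NF A n).2, ∃ l : List (NodeExpr A), l ≠ [] ∧
    (∀ ψ ∈ l, ψ ∈ (NF A (n+1)).2) ∧ NDer φ (bigOr l)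

theorem theta_d_dich {n : ℕ} (pl : PathLift (A := A) n)
    {θ : NodeExpr A} {a : A} {C : List (NodeExpr A)}
    (hC : C ∈ (Dlist A (n+1)).sublists) (hθ : θ = mkNFb (.lab a) C (Dlist A (n+1)))
    {d : NodeExpr A} (hd : d ∈ Dlist A n) :
    (NDer (.conj θ d) θ ∨ NDer (.conj θ d) botN) ∧
      (NDer (.conj θ (.neg d)) θ ∨ NDer (.conj θ (.neg d)) botN) := by
  obtain ⟨α, hα, β, hβ, rfl⟩ := mem_Dlist_elim hd
  obtain ⟨lα, hlαne, hlα, hαd⟩ := pl α hα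
  obtain ⟨lβ, hlβne, hlβ, hβd⟩ := pl β hβ
  set es : List (NodeExpr A) := lα.flatMap fun α' => lβ.map fun β' => .eqTest α' β' with hes_def
  have hes : NDer (.eqTest α β) (bigOr es) :=
    .trans (.congr_eqTest hαd hβd) (.eq_bigUnion lα lβ)
  have hmemes : ∀ e ∈ es, e ∈ Dlist A (n+1) := by
    intro e he
    rw [hes_def, List.mem_flatMap] at he
    obtain ⟨α', hα', he⟩ := he
    rw [List.mem_map] at he
    obtain ⟨β', hβ', rfl⟩ := he
    exact mem_Dlist_intro (hlα α' hα') (hlβ β' hβ')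
  have hCs : C.Sublist (Dlist A (n+1)) := List.mem_sublists.mp hC
  have hdichE : ∀ e ∈ es, NDer (.conj θ e) θ ∨ NDer (.conj θ e) botN := by
    intro e he
    by_cases heC : e ∈ C
    · exact Or.inl (hθ ▸ NDer.mkNFb_decide_pos (hmemes e he) heC _)
    · exact Or.inr (hθ ▸ NDer.mkNFb_decide_neg (hmemes e he) heC _)
  constructor
  · have h1 : NDer (.conj θ (.eqTest α β)) (bigOr (es.map (.conj θ ·))) :=
      .trans (.congr_conj (.refl _) hes) (.and_bigOr θ es)
    have h2 : NDer (bigOr (es.map (.conj θ ·))) θ ∨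
        NDer (bigOr (es.map (.conj θ ·))) botN := by
      refine NDer.bigOr_dich ?_
      intro x hx
      rw [List.mem_map] at hx
      obtain ⟨e, he, rfl⟩ := hx
      exact hdichE e he
    exact h2.imp (fun h => .trans h1 h) (fun h => .trans h1 h)
  · have hc : NDer (.conj θ (.neg (.eqTest α β))) (.conj θ (.neg (bigOr es))) :=
      .congr_conj (.refl _) (.congr_neg hes)
    by_cases hex : ∃ e ∈ es, NDer (.conj θ e) θ
    · obtain ⟨e, he, hder⟩ := hex
      exact Or.inr (.trans hc (.and_neg_bigOr_mem he hder))
    · refine Or.inl (.trans hc (.and_neg_bigOr_all ?_))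
      intro e he
      rcases hdichE e he with h | h
      · exact absurd ⟨e, he, h⟩ hex
      · exact h

theorem nodeLift_of_pathLift {n : ℕ} (pl : PathLift (A := A) n) : NodeLift (A := A) n := by
  intro φ hφ
  have hD' : (Dlist A (n+1)).Nodup := Dlist_nodup (n+1)
  -- consistency and dichotomy against level-(n+1) atoms
  have key : NConsistent φ ∧ ∀ (a : A) (C : List (NodeExpr A)) (θ : NodeExpr A),
      C ∈ (Dlist A (n+1)).sublists → θ = mkNFb (.lab a) C (Dlist A (n+1)) →
      NDer (.conj θ φ) θ ∨ NDer (.conj θ φ) botN := by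
    cases n with
    | zero =>
      rw [NF_zero_2, List.mem_map] at hφ
      obtain ⟨b, _, rfl⟩ := hφ
      refine ⟨atom0_consistent b, ?_⟩
      intro a C θ hC hθ
      have hφb : NDer (NodeExpr.conj (.lab b) (.eqTest .eps .eps)) (.lab b) :=
        .trans (.congr_conj (.refl _) (.eqAx6 .eps)) (.and_top _)
      have hlab := NDer.label_dich a b C (Dlist A 1)
      rw [← hθ] at hlab
      exact hlab.imp
        (fun h => .trans (.congr_conj (.refl θ) hφb) h)
        (fun h => .trans (.congr_conj (.refl θ) hφb) h)
    | succ m =>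
      obtain ⟨hcons, b, C₀, hC₀, rfl⟩ := mem_N_succ_elim hφ
      refine ⟨hcons, ?_⟩
      intro a C θ hC hθ
      have hfold := NDer.fold_dich (θ := θ)
        (fun d => if d ∈ C₀ then d else .neg d) (Dlist A (m+1)) (.lab b)
        (by
          have := NDer.label_dich a b C (Dlist A (m+2))
          rw [← hθ] at this
          exact this)
        (by
          intro d hd
          have hdd := theta_d_dich pl hC hθ hd
          by_cases hdC : d ∈ C₀
          · beta_reduce; rw [if_pos hdC]; exact hdd.1
          · beta_reduce; rw [if_neg hdC]; exact hdd.2)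
      exact hfold
  obtain ⟨hcons, hdec⟩ := key
  -- expand ⊤ into atoms
  have h1 : NDer φ (bigOr (((Finset.univ : Finset A).toList.map NodeExpr.lab).map
      (fun x => .conj φ x))) :=
    .trans (.symm (.and_top φ)) (.trans (.congr_conj (.refl φ) .lbAx1) (.and_bigOr φ _))
  have h2 : ∃ L, (∀ θ ∈ L, θ ∈ (NF A (n+1)).2) ∧
      NDer (bigOr (((Finset.univ : Finset A).toList.map NodeExpr.lab).map
        (fun x => NodeExpr.conj φ x))) (bigOr L) := by
    refine NDer.bigOr_lift₀ ?_
    intro x hx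
    rw [List.mem_map] at hx
    obtain ⟨x', hx', rfl⟩ := hx
    rw [List.mem_map] at hx'
    obtain ⟨a, _, rfl⟩ := hx'
    obtain ⟨la, hcerts, hexp⟩ := NDer.expand hD' (NodeExpr.lab a)
    have hx1 : NDer (NodeExpr.conj φ (.lab a)) (bigOr (la.map fun θ => .conj θ φ)) :=
      .trans (.congr_conj (.refl φ) hexp)
        (.trans (.and_bigOr φ la) (NDer.bigOr_map_congr fun θ _ => .and_comm φ θ))
    have h3 : ∃ L, (∀ θ ∈ L, θ ∈ (NF A (n+1)).2) ∧
        NDer (bigOr (la.map fun θ => .conj θ φ)) (bigOr L) := by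
      refine NDer.bigOr_lift₀ ?_
      intro y hy
      rw [List.mem_map] at hy
      obtain ⟨θ, hθla, rfl⟩ := hy
      obtain ⟨C, hC, hθ⟩ := hcerts θ hθla
      have hdich := hdec a C θ hC hθ
      by_cases hybot : NDer (NodeExpr.conj θ φ) botN
      · exact ⟨[], by simp, hybot⟩
      · have hyθ : NDer (NodeExpr.conj θ φ) θ := by
          rcases hdich with h | h
          · exact h
          · exact absurd h hybot
        have hconsθ : NConsistent θ := fun hbot => hybot (hyθ.trans hbot)
        refine ⟨[θ], ?_, .trans hyθ (.symm (.or_bot θ))⟩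
        intro ψ hψ
        rw [List.mem_singleton] at hψ
        have hθ' : θ = mkNF a C (Dlist A (n+1)) := by rw [mkNF_eq_mkNFb]; exact hθ
        rw [hψ, hθ']
        exact mem_N_succ_intro hC (hθ' ▸ hconsθ)
    obtain ⟨L, hL, hLd⟩ := h3
    exact ⟨L, hL, .trans hx1 hLd⟩
  obtain ⟨L, hLmem, hLd⟩ := h2
  have hφL : NDer φ (bigOr L) := .trans h1 hLd
  refine ⟨L, ?_, hLmem, hφL⟩
  intro hLnil
  subst hLnil
  exact hcons hφL

end XPathMinus
namespace XPathMinus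
set_option linter.unusedSectionVars false
variable {A : Type} [Fintype A]

open NodeExpr PathExpr

theorem eps_mem_NF (n : ℕ) : PathExpr.eps ∈ (NF A n).1 := by
  cases n with
  | zero => simp [NF_zero_1]
  | succ n => rw [NF_succ_1]; exact List.mem_cons_self

theorem stepAll (n : ℕ) : NodeLift (A := A) n ∧ PathLift (A := A) n := by
  induction n with
  | zero =>
    have pl : PathLift (A := A) 0 := by
      intro α hα
      rw [NF_zero_1, List.mem_singleton] at hα
      subst hα
      refine ⟨[.eps], by simp, ?_, .symm (.union_bot .eps)⟩
      intro β hβ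
      rw [List.mem_singleton] at hβ
      subst hβ
      exact eps_mem_NF 1
    exact ⟨nodeLift_of_pathLift pl, pl⟩
  | succ n ih =>
    have pl : PathLift (A := A) (n+1) := by
      intro α hα
      rw [NF_succ_1, List.mem_cons] at hα
      rcases hα with rfl | hα
      · refine ⟨[.eps], by simp, ?_, .symm (.union_bot .eps)⟩
        intro β hβ
        rw [List.mem_singleton] at hβ
        subst hβ
        exact eps_mem_NF (n+2)
      · rw [List.mem_flatMap] at hα
        obtain ⟨ψ, hψ, hα⟩ := hα
        rw [List.mem_map] at hα
        obtain ⟨β, hβ, rfl⟩ := hα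
        obtain ⟨lψ, hlψne, hlψ, hψd⟩ := ih.1 ψ hψ
        obtain ⟨lβ, hlβne, hlβ, hβd⟩ := ih.2 β hβ
        obtain ⟨t, ts, rfl⟩ := List.exists_cons_of_ne_nil hlψne
        obtain ⟨b, bs, rfl⟩ := List.exists_cons_of_ne_nil hlβne
        set lψ : List (NodeExpr A) := t :: ts
        set lβ : List (PathExpr A) := b :: bs
        -- inner composition
        have h0 : PDer (PathExpr.comp (.test ψ) β)
            (.comp (.test (bigOr lψ)) (bigUnion lβ)) :=
          .congr_comp (.congr_test hψd) hβd
        have h1 : PDer (PathExpr.comp (.test (bigOr lψ)) (bigUnion lβ))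
            (.comp (bigUnion (lψ.map PathExpr.test)) (bigUnion lβ)) :=
          .congr_comp (.test_bigOr lψ) (.refl _)
        have h2 : PDer (PathExpr.comp (bigUnion (lψ.map PathExpr.test)) (bigUnion lβ))
            (bigUnion ((lψ.map PathExpr.test).map (fun x => PathExpr.comp x (bigUnion lβ)))) := by
          have := PDer.comp_right_bigUnion (A := A) (.test t) (ts.map PathExpr.test) (bigUnion lβ)
          simpa [lψ] using this
        have h3 : PDer
            (bigUnion ((lψ.map PathExpr.test).map (fun x => PathExpr.comp x (bigUnion lβ))))
            (bigUnion ((lψ.map PathExpr.test).flatMap fun x => lβ.map fun β' => .comp x β')) := by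
          refine PDer.bigUnion_flat ?_
          intro x _
          have := PDer.comp_left_bigUnion (A := A) x b bs
          simpa [lβ] using this
        set L₂ : List (PathExpr A) :=
          (lψ.map PathExpr.test).flatMap fun x => lβ.map fun β' => .comp x β' with hL₂
        have hL₂ne : L₂ ≠ [] := by simp [hL₂, lψ, lβ]
        obtain ⟨u, us, hcons⟩ := List.exists_cons_of_ne_nil hL₂ne
        have h4 : PDer (PathExpr.comp .down (bigUnion L₂))
            (bigUnion (L₂.map (fun x => PathExpr.comp .down x))) := by
          rw [hcons]
          exact PDer.comp_left_bigUnion .down u us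
        have hfin : PDer (PathExpr.comp .down (.comp (.test ψ) β))
            (bigUnion (L₂.map (fun x => PathExpr.comp .down x))) := by
          refine .trans (.congr_comp (.refl _)
            (.trans h0 (.trans h1 (.trans h2 h3)))) h4
        refine ⟨L₂.map (fun x => PathExpr.comp .down x), by simp [hL₂ne], ?_, hfin⟩
        intro γ hγ
        rw [List.mem_map] at hγ
        obtain ⟨x, hx, rfl⟩ := hγ
        rw [hL₂, List.mem_flatMap] at hx
        obtain ⟨y, hy, hx⟩ := hx
        rw [List.mem_map] at hx hy
        obtain ⟨β', hβ', rfl⟩ := hx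
        obtain ⟨ψ', hψ', rfl⟩ := hy
        rw [NF_succ_1]
        refine List.mem_cons_of_mem _ ?_
        rw [List.mem_flatMap]
        exact ⟨ψ', hlψ ψ' hψ', List.mem_map.mpr ⟨β', hlβ β' hβ', rfl⟩⟩
    exact ⟨nodeLift_of_pathLift pl, pl⟩

end XPathMinus

/-- Normal forms of level `n` are provably equivalent to disjunctions (resp.
unions) of normal forms of any higher level `m > n`. -/
theorem XPathMinus.nf_lift {A : Type} [Fintype A] (hA : 1 < Fintype.card A)
    (m n : ℕ) (hmn : n < m) :
    (∀ φ ∈ Nnf A n, ∃ l : List (NodeExpr A), l ≠ [] ∧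
      (∀ ψ ∈ l, ψ ∈ Nnf A m) ∧ NDer φ (bigOr l)) ∧
    (∀ α ∈ Pnf A n, ∃ l : List (PathExpr A), l ≠ [] ∧
      (∀ β ∈ l, β ∈ Pnf A m) ∧ PDer α (bigUnion l)) := by
  have key : ∀ m : ℕ, n + 1 ≤ m →
      (∀ φ ∈ (NF A n).2, ∃ l : List (NodeExpr A), l ≠ [] ∧
        (∀ ψ ∈ l, ψ ∈ (NF A m).2) ∧ NDer φ (bigOr l)) ∧
      (∀ α ∈ (NF A n).1, ∃ l : List (PathExpr A), l ≠ [] ∧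
        (∀ β ∈ l, β ∈ (NF A m).1) ∧ PDer α (bigUnion l)) := by
    intro m hm
    induction m, hm using Nat.le_induction with
    | base => exact ⟨(stepAll n).1, (stepAll n).2⟩
    | succ m hm ih =>
      constructor
      · intro φ hφ
        obtain ⟨l, hlne, hlmem, hld⟩ := ih.1 φ hφ
        obtain ⟨L, hLne, hLmem, hLd⟩ := NDer.bigOr_lift_ne
          (l := l) (P := fun ψ => ψ ∈ (NF A (m+1)).2)
          (fun x hx => (stepAll m).1 x (hlmem x hx))
        exact ⟨L, hLne hlne, hLmem, .trans hld hLd⟩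
      · intro α hα
        obtain ⟨l, hlne, hlmem, hld⟩ := ih.2 α hα
        obtain ⟨L, hLne, hLmem, hLd⟩ := PDer.bigUnion_lift_ne
          (l := l) (P := fun β => β ∈ (NF A (m+1)).1)
          (fun x hx => (stepAll m).2 x (hlmem x hx))
        exact ⟨L, hLne hlne, hLmem, .trans hld hLd⟩
  exact key m hmn
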